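/- Let μ be a probability measure on X supported on {x : ∃ i ∈ [m], c(x,u_i) < ∞} which is non-degenerate with respect to (u_i)_{i=1}^m, i.e., μ({x : c(x,u_i) < ∞} ∩ {x : c(x,u_j) < ∞}) > 0 for all i ≠ j. Then the Hall polytope P((u_i)_{i=1}^m, μ) ⊆ Δ_m has affine dimension m − 1 (i.e., it is full-dimensional in the simplex). -/

import Mathlib

open MeasureTheory

/-- The set `A_I = {x : ∃ i ∈ I, c(x,u_i) < ∞}` (the target space is identified with `Fin m`). -/
def hallSet {X : Type*} {m : ℕ} (c : X → Fin m → EReal) (I : Finset (Fin m)) : Set X :=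
  {x | ∃ i ∈ I, c x i ≠ ⊤}

/-- The Hall polytope `P = {α ∈ Δ_m : ∀ I, Σ_{i∈I} α_i ≤ μ(A_I)}`. -/
def hallPolytope {X : Type*} [MeasurableSpace X] {m : ℕ} (c : X → Fin m → EReal)
    (μ : Measure X) : Set (Fin m → ℝ) :=
  {α | (∀ i, 0 ≤ α i) ∧ (∑ i, α i = 1) ∧
    ∀ I : Finset (Fin m), ∑ i ∈ I, α i ≤ (μ (hallSet c I)).toReal}

theorem hallSet_measurable {X : Type*} [MeasurableSpace X] {m : ℕ} (c : X → Fin m → EReal)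
    (hA : ∀ i : Fin m, MeasurableSet {x | c x i ≠ ⊤}) (I : Finset (Fin m)) :
    MeasurableSet (hallSet c I) := by
  have : hallSet c I = ⋃ i ∈ I, {x | c x i ≠ ⊤} := by
    ext x; simp [hallSet]
  rw [this]
  exact MeasurableSet.biUnion I.countable_toSet fun i _ => hA i

theorem hallSet_univ_measure {X : Type*} [MeasurableSpace X] {m : ℕ} (c : X → Fin m → EReal)
    (hA : ∀ i : Fin m, MeasurableSet {x | c x i ≠ ⊤})
    (μ : Measure X) [IsProbabilityMeasure μ]
    (hsupp : μ {x | ∀ i, c x i = ⊤} = 0) :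
    μ (hallSet c Finset.univ) = 1 := by
  have hc : (hallSet c Finset.univ)ᶜ = {x | ∀ i, c x i = ⊤} := by
    ext x; simp [hallSet]
  have := measure_add_measure_compl (μ := μ) (hallSet_measurable c hA Finset.univ)
  rw [hc, hsupp, add_zero, measure_univ] at this
  exact this

theorem exists_strict_point {X : Type*} [MeasurableSpace X] {m : ℕ} [NeZero m]
    (c : X → Fin m → EReal)
    (hA : ∀ i : Fin m, MeasurableSet {x | c x i ≠ ⊤})
    (μ : Measure X) [IsProbabilityMeasure μ]
    (hsupp : μ {x | ∀ i, c x i = ⊤} = 0)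
    (hnd : ∀ i j : Fin m, i ≠ j → 0 < μ ({x | c x i ≠ ⊤} ∩ {x | c x j ≠ ⊤}))
    (hm : 2 ≤ m) :
    ∃ α : Fin m → ℝ, (∀ i, 0 < α i) ∧ (∑ i, α i = 1) ∧
      ∀ I : Finset (Fin m), I.Nonempty → I ≠ Finset.univ →
        ∑ i ∈ I, α i < (μ (hallSet c I)).toReal := by
  classical
  -- the blocks
  set B : Fin m → Fin m → Set X :=
    fun j i => {x | c x i ≠ ⊤ ∧ ∀ k, k - j < i - j → c x k = ⊤} with hB
  have hpos : ∀ a : Fin m, a ≠ 0 → 0 < a := by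
    intro a h
    rw [Fin.lt_def, Fin.val_zero]
    have : a.val ≠ 0 := fun hv => h (Fin.ext (by simp [hv, Fin.val_zero]))
    omega
  have hnlt0 : ∀ a : Fin m, ¬ a < 0 := by
    intro a; rw [Fin.lt_def, Fin.val_zero]; omega
  -- measurability
  have hBmeas : ∀ j i, MeasurableSet (B j i) := by
    intro j i
    have : B j i = {x | c x i ≠ ⊤} ∩ ⋂ k ∈ {k : Fin m | k - j < i - j}, ({x | c x k ≠ ⊤})ᶜ := by
      ext x
      simp only [hB, Set.mem_setOf_eq, Set.mem_inter_iff, Set.mem_iInter, Set.mem_compl_iff,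
        not_not]
    rw [this]
    exact (hA i).inter (MeasurableSet.biInter (Set.to_countable _) fun k _ => (hA k).compl)
  -- disjointness
  have hdisj : ∀ j, ∀ i ∈ (Finset.univ : Finset (Fin m)), ∀ i' ∈ (Finset.univ : Finset (Fin m)),
      i ≠ i' → Disjoint (B j i) (B j i') := by
    intro j i _ i' _ hne
    have key : ∀ a b : Fin m, a - j < b - j → Disjoint (B j a) (B j b) := by
      intro a b hab
      rw [Set.disjoint_left]
      rintro x ⟨hxa, -⟩ ⟨-, hb⟩
      exact hxa (hb a hab)
    have hsub : i - j ≠ i' - j := fun h => hne (by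
      have := sub_left_inj.1 h; exact this)
    rcases lt_or_gt_of_ne hsub with h | h
    · exact key i i' h
    · exact (key i' i h).symm
  -- cover
  have hcover : ∀ j, (⋃ i, B j i) = hallSet c Finset.univ := by
    intro j
    apply Set.eq_of_subset_of_subset
    · intro x hx
      rcases Set.mem_iUnion.1 hx with ⟨i, hi, -⟩
      exact ⟨i, Finset.mem_univ i, hi⟩
    · rintro x ⟨i, -, hi⟩
      set F : Finset (Fin m) := Finset.univ.filter (fun i => c x i ≠ ⊤) with hF
      have hFne : F.Nonempty := ⟨i, by simp [hF, hi]⟩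
      obtain ⟨i₀, hi₀F, hmin⟩ := F.exists_min_image (fun i => i - j) hFne
      refine Set.mem_iUnion.2 ⟨i₀, ?_, ?_⟩
      · exact (Finset.mem_filter.1 hi₀F).2
      · intro k hk
        by_contra hck
        have hkF : k ∈ F := by simp [hF, hck]
        exact absurd hk (not_lt.2 (hmin k hkF))
  -- the measures
  set β : Fin m → Fin m → ℝ := fun j i => (μ (B j i)).toReal with hβ
  have hβnn : ∀ j i, 0 ≤ β j i := fun j i => ENNReal.toReal_nonneg
  have hsumI : ∀ j (I : Finset (Fin m)), ∑ i ∈ I, β j i = (μ (⋃ i ∈ I, B j i)).toReal := by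
    intro j I
    rw [measure_biUnion_finset (fun i _ i' _ h => hdisj j i (Finset.mem_univ i) i'
      (Finset.mem_univ i') h) (fun i _ => hBmeas j i)]
    rw [ENNReal.toReal_sum (fun i _ => measure_ne_top μ _)]
  have hUsub : ∀ j (I : Finset (Fin m)), (⋃ i ∈ I, B j i) ⊆ hallSet c I := by
    intro j I x hx
    rcases Set.mem_iUnion₂.1 hx with ⟨i, hiI, hxi, -⟩
    exact ⟨i, hiI, hxi⟩
  have huniv : μ (hallSet c Finset.univ) = 1 := hallSet_univ_measure c hA μ hsupp
  have hsum1 : ∀ j, ∑ i, β j i = 1 := by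
    intro j
    rw [hsumI j Finset.univ]
    have : (⋃ i ∈ (Finset.univ : Finset (Fin m)), B j i) = ⋃ i, B j i := by
      simp
    rw [this, hcover j, huniv, ENNReal.toReal_one]
  -- positivity of diagonal
  have hnontriv : Nontrivial (Fin m) := ⟨⟨⟨0, by omega⟩, ⟨1, by omega⟩, by simp [Fin.ext_iff]⟩⟩
  have hβdiag : ∀ i, 0 < β i i := by
    intro i
    obtain ⟨k, hk⟩ := @exists_ne _ hnontriv i
    have hsub : {x | c x i ≠ ⊤} ∩ {x | c x k ≠ ⊤} ⊆ B i i := by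
      rintro x ⟨hxi, -⟩
      exact ⟨hxi, fun k' hk' => absurd hk' (by simpa using hnlt0 (k' - i))⟩
    have h1 : 0 < μ (B i i) := lt_of_lt_of_le (hnd i k (Ne.symm hk)) (measure_mono hsub)
    exact ENNReal.toReal_pos h1.ne' (measure_ne_top μ _)
  -- strictness
  have hstrict : ∀ (I : Finset (Fin m)), I.Nonempty → I ≠ Finset.univ → ∀ j ∉ I,
      ∑ i ∈ I, β j i < (μ (hallSet c I)).toReal := by
    intro I hIne hIuniv j hj
    obtain ⟨i₀, hi₀⟩ := hIne
    have hCsub : {x | c x i₀ ≠ ⊤} ∩ {x | c x j ≠ ⊤} ⊆ hallSet c I := by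
      rintro x ⟨hx, -⟩; exact ⟨i₀, hi₀, hx⟩
    have hUdisj : Disjoint (⋃ i ∈ I, B j i) ({x | c x i₀ ≠ ⊤} ∩ {x | c x j ≠ ⊤}) := by
      rw [Set.disjoint_left]
      intro x hx
      rcases Set.mem_iUnion₂.1 hx with ⟨i, hiI, -, hall⟩
      have hij : i ≠ j := fun h => hj (h ▸ hiI)
      have : c x j = ⊤ := hall j (by
        have : (0:Fin m) < i - j := hpos _ (sub_ne_zero.2 hij)
        simpa using this)
      rintro ⟨-, hxj⟩
      exact hxj this
    have hmeasC : MeasurableSet ({x | c x i₀ ≠ ⊤} ∩ {x | c x j ≠ ⊤}) := (hA i₀).inter (hA j)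
    have hle : μ (⋃ i ∈ I, B j i) + μ ({x | c x i₀ ≠ ⊤} ∩ {x | c x j ≠ ⊤})
        ≤ μ (hallSet c I) := by
      rw [← measure_union hUdisj hmeasC]
      apply measure_mono
      exact Set.union_subset (hUsub j I) hCsub
    have hlt : μ (⋃ i ∈ I, B j i) < μ (hallSet c I) :=
      lt_of_lt_of_le (ENNReal.lt_add_right (measure_ne_top μ _) (hnd i₀ j
        (fun h => hj (h ▸ hi₀))).ne') hle
    rw [hsumI j I]
    exact (ENNReal.toReal_lt_toReal (measure_ne_top μ _) (measure_ne_top μ _)).2 hlt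
  -- define α
  refine ⟨fun i => (∑ j, β j i) / m, ?_, ?_, ?_⟩
  · intro i
    apply div_pos _ (by positivity : (0:ℝ) < m)
    calc (0:ℝ) < β i i := hβdiag i
      _ ≤ ∑ j, β j i := Finset.single_le_sum (fun j _ => hβnn j i) (Finset.mem_univ i)
  · rw [← Finset.sum_div]
    rw [Finset.sum_comm]
    simp only [hsum1]
    simp
  · intro I hIne hIuniv
    have : ∃ j, j ∉ I := by
      by_contra h; push_neg at h
      exact hIuniv (Finset.eq_univ_iff_forall.2 h)
    obtain ⟨j₀, hj₀⟩ := this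
    rw [← Finset.sum_div, Finset.sum_comm]
    have hlt : ∑ j, ∑ i ∈ I, β j i < ∑ _j : Fin m, (μ (hallSet c I)).toReal := by
      apply Finset.sum_lt_sum
      · intro j _
        by_cases hj : j ∈ I
        · rw [hsumI j I]
          exact ENNReal.toReal_mono (measure_ne_top μ _) (measure_mono (hUsub j I))
        · exact (hstrict I hIne hIuniv j hj).le
      · exact ⟨j₀, Finset.mem_univ j₀, hstrict I hIne hIuniv j₀ hj₀⟩
    have hmpos : (0:ℝ) < m := by positivity
    calc (∑ j, ∑ i ∈ I, β j i) / m < (∑ _j : Fin m, (μ (hallSet c I)).toReal) / m := by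
          exact div_lt_div_of_pos_right hlt hmpos
      _ = (μ (hallSet c I)).toReal := by
          rw [Finset.sum_const, Finset.card_univ, Fintype.card_fin, nsmul_eq_mul]
          field_simp

/-- if `μ` is non-degenerate with respect to `(u_i)` then the Hall polytope
is full-dimensional: its affine hull has dimension `m − 1`. -/
theorem hallPolytope_full_dimensional {X : Type*} [MeasurableSpace X] {m : ℕ}
    (c : X → Fin m → EReal) (hbot : ∀ x i, c x i ≠ ⊥)
    (hA : ∀ i : Fin m, MeasurableSet {x | c x i ≠ ⊤})
    (μ : Measure X) [IsProbabilityMeasure μ]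
    (hsupp : μ {x | ∀ i, c x i = ⊤} = 0)
    (hnd : ∀ i j : Fin m, i ≠ j → 0 < μ ({x | c x i ≠ ⊤} ∩ {x | c x j ≠ ⊤})) :
    Module.finrank ℝ (affineSpan ℝ (hallPolytope c μ)).direction = m - 1 := by
  classical
  set f : (Fin m → ℝ) →ₗ[ℝ] ℝ := ∑ i, LinearMap.proj i with hf
  have hfapply : ∀ v : Fin m → ℝ, f v = ∑ i, v i := by
    intro v; simp [hf]
  -- upper bound : the direction lies in the kernel of the sum functional
  have hdirle : (affineSpan ℝ (hallPolytope c μ)).direction ≤ LinearMap.ker f := by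
    rw [direction_affineSpan, vectorSpan_def]
    apply Submodule.span_le.2
    rintro v hv
    rcases Set.mem_vsub.1 hv with ⟨p, hp, q, hq, rfl⟩
    have : f (p -ᵥ q) = 0 := by
      have hpq : (p -ᵥ q : Fin m → ℝ) = p - q := rfl
      rw [hpq, map_sub, hfapply, hfapply, hp.2.1, hq.2.1, sub_self]
    exact this
  have hkerrank : Module.finrank ℝ (LinearMap.ker f) = m - 1 := by
    rcases Nat.eq_zero_or_pos m with hm0 | hm0
    · subst hm0
      haveI : Subsingleton (LinearMap.ker f) :=
        ⟨fun a b => Subtype.ext (Subsingleton.elim _ _)⟩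
      rw [Module.finrank_zero_of_subsingleton]
    · have hsurj : Function.Surjective f := by
        intro r
        refine ⟨fun _ => r / m, ?_⟩
        rw [hfapply]
        rw [Finset.sum_const, Finset.card_univ, Fintype.card_fin, nsmul_eq_mul]
        field_simp
      have h2 := LinearMap.finrank_range_add_finrank_ker f
      rw [LinearMap.range_eq_top.2 hsurj, finrank_top] at h2
      simp [Module.finrank_pi] at h2
      omega
  have hub : Module.finrank ℝ (affineSpan ℝ (hallPolytope c μ)).direction ≤ m - 1 :=
    (Submodule.finrank_mono hdirle).trans_eq hkerrank
  rcases lt_or_ge m 2 with hm2 | hm2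
  · omega
  · -- lower bound for m ≥ 2
    haveI : NeZero m := ⟨by omega⟩
    obtain ⟨α, hαpos, hαsum, hαstrict⟩ := exists_strict_point c hA μ hsupp hnd hm2
    have huniv1 : (μ (hallSet c Finset.univ)).toReal = 1 := by
      rw [hallSet_univ_measure c hA μ hsupp, ENNReal.toReal_one]
    have hαmem : α ∈ hallPolytope c μ := by
      refine ⟨fun i => (hαpos i).le, hαsum, fun I => ?_⟩
      by_cases hIu : I = Finset.univ
      · subst hIu; rw [hαsum, huniv1]
      · rcases I.eq_empty_or_nonempty with rfl | hIne
        · simp [ENNReal.toReal_nonneg]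
        · exact (hαstrict I hIne hIu).le
    -- the slack
    set S : Finset (Finset (Fin m)) :=
      Finset.univ.filter (fun I => I.Nonempty ∧ I ≠ Finset.univ) with hS
    have hSne : S.Nonempty := by
      refine ⟨{0}, ?_⟩
      simp only [hS, Finset.mem_filter, Finset.mem_univ, true_and]
      constructor
      · exact ⟨0, Finset.mem_singleton_self 0⟩
      · intro h
        have := Finset.card_univ (α := Fin m)
        rw [← h] at this
        simp [Fintype.card_fin] at this
        omega
    set δ₁ : ℝ := Finset.univ.inf' Finset.univ_nonempty α with hδ₁
    set δ₂ : ℝ := S.inf' hSne (fun I => (μ (hallSet c I)).toReal - ∑ i ∈ I, α i) with hδ₂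
    set δ : ℝ := min δ₁ δ₂ with hδ
    have hδpos : 0 < δ := by
      apply lt_min
      · exact (Finset.lt_inf'_iff _).2 fun i _ => hαpos i
      · refine (Finset.lt_inf'_iff _).2 fun I hI => ?_
        rw [hS, Finset.mem_filter] at hI
        have := hαstrict I hI.2.1 hI.2.2
        linarith
    have hδle₁ : ∀ i, δ ≤ α i := fun i =>
      (min_le_left _ _).trans (Finset.inf'_le _ (Finset.mem_univ i))
    have hδle₂ : ∀ I, I.Nonempty → I ≠ Finset.univ →
        δ ≤ (μ (hallSet c I)).toReal - ∑ i ∈ I, α i := by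
      intro I h1 h2
      exact (min_le_right _ _).trans (Finset.inf'_le _ (by simp [hS, h1, h2]))
    -- the perturbed points
    set p : Fin m → (Fin m → ℝ) :=
      fun k => α + δ • ((Pi.single k 1 : Fin m → ℝ) - Pi.single 0 1) with hp
    have hsingle_sum : ∀ (k : Fin m) (I : Finset (Fin m)),
        ∑ i ∈ I, (Pi.single k 1 : Fin m → ℝ) i = if k ∈ I then 1 else 0 := by
      intro k I; simp [Pi.single_apply, Finset.sum_ite_eq']
    have hsingle_bd : ∀ (k i : Fin m), 0 ≤ (Pi.single k 1 : Fin m → ℝ) i ∧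
        (Pi.single k 1 : Fin m → ℝ) i ≤ 1 := by
      intro k i
      simp only [Pi.single_apply]
      split_ifs <;> norm_num
    have hpsumI : ∀ (k : Fin m) (I : Finset (Fin m)),
        ∑ i ∈ I, p k i = ∑ i ∈ I, α i +
          δ * ((if k ∈ I then (1:ℝ) else 0) - (if (0:Fin m) ∈ I then (1:ℝ) else 0)) := by
      intro k I
      simp only [hp, Pi.add_apply, Pi.smul_apply, Pi.sub_apply, smul_eq_mul]
      rw [Finset.sum_add_distrib, ← Finset.mul_sum, Finset.sum_sub_distrib,
        hsingle_sum, hsingle_sum]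
    have hpmem : ∀ k, p k ∈ hallPolytope c μ := by
      intro k
      refine ⟨?_, ?_, ?_⟩
      · intro i
        have h1 := hsingle_bd k i
        have h2 := hsingle_bd 0 i
        have h3 := hδle₁ i
        simp only [hp, Pi.add_apply, Pi.smul_apply, Pi.sub_apply, smul_eq_mul]
        nlinarith [hδpos.le]
      · have := hpsumI k Finset.univ
        simp only [Finset.mem_univ, if_true] at this
        rw [this, hαsum]
        ring
      · intro I
        rw [hpsumI k I]
        by_cases hIu : I = Finset.univ
        · subst hIu
          simp only [Finset.mem_univ, if_true]
          rw [hαsum, huniv1]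
          ring_nf
          norm_num
        · rcases I.eq_empty_or_nonempty with rfl | hIne
          · simp [ENNReal.toReal_nonneg]
          · have hs := hδle₂ I hIne hIu
            have hbd : ((if k ∈ I then (1:ℝ) else 0) - (if (0:Fin m) ∈ I then (1:ℝ) else 0)) ≤ 1 := by
              split_ifs <;> norm_num
            nlinarith [hδpos.le]
    -- direction contains the difference vectors
    have hdirmem : ∀ k : Fin m,
        ((Pi.single k 1 : Fin m → ℝ) - Pi.single 0 1) ∈
          (affineSpan ℝ (hallPolytope c μ)).direction := by
      intro k
      have h1 : p k - α ∈ (affineSpan ℝ (hallPolytope c μ)).direction :=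
        AffineSubspace.vsub_mem_direction (subset_affineSpan ℝ _ (hpmem k))
          (subset_affineSpan ℝ _ hαmem)
      have h2 : p k - α = δ • ((Pi.single k 1 : Fin m → ℝ) - Pi.single 0 1) := by
        simp [hp]
      rw [h2] at h1
      have h3 := Submodule.smul_mem _ δ⁻¹ h1
      rwa [smul_smul, inv_mul_cancel₀ hδpos.ne', one_smul] at h3
    have hkerle : LinearMap.ker f ≤ (affineSpan ℝ (hallPolytope c μ)).direction := by
      intro v hv
      have hv0 : ∑ i, v i = 0 := by
        have := LinearMap.mem_ker.1 hv
        rwa [hfapply] at this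
      have e1 : ∀ k : Fin m, v k • (Pi.single k 1 : Fin m → ℝ) = Pi.single k (v k) := by
        intro k; ext i; simp [Pi.single_apply, mul_ite]
      have hrepr : ∑ k, v k • ((Pi.single k 1 : Fin m → ℝ) - Pi.single 0 1) = v := by
        simp only [smul_sub]
        rw [Finset.sum_sub_distrib]
        simp only [e1]
        rw [Finset.univ_sum_single, ← Finset.sum_smul, hv0, zero_smul, sub_zero]
      rw [← hrepr]
      exact Submodule.sum_mem _ fun k _ => Submodule.smul_mem _ _ (hdirmem k)
    have hlb : m - 1 ≤ Module.finrank ℝ (affineSpan ℝ (hallPolytope c μ)).direction :=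
      hkerrank ▸ Submodule.finrank_mono hkerle
    omega
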